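/- Under the hypotheses of the twelve coupled M=2 ODEs (as above), the quantity det(C − A) is constant on (0,∞), where C is the 3×3 matrix with rows (−η0, −1, 0), (−η1, 0, −1), (ξ0−η2, ξ1, ξ2) and A is the rank-one matrix with entries A_{jk} = x_j·y_k for j,k ∈ {0,1,2}. Equivalently, the derivative of the expression ξ0 − η2 − η0·ξ1 − ξ2·η1 − x2·y0 + η0·x2·y1 − ξ2·x1·y0 + η0·ξ2·x1·y1 − ξ1·x0·y0 + (ξ0−η2−ξ2·η1)·x0·y1 + ξ1·η1·x0·y2 + (ξ0−η2−η0·ξ1)·x1·y2 + η1·x2·y2 vanishes on (0,∞). -/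

import Mathlib

open Set

theorem stmt_12 (x0 x1 x2 y0 y1 y2 ξ0 ξ1 ξ2 η0 η1 η2 : ℝ → ℝ)
    (hx0 : ∀ s ∈ Ioi (0:ℝ), DifferentiableAt ℝ x0 s)
    (hx1 : ∀ s ∈ Ioi (0:ℝ), DifferentiableAt ℝ x1 s)
    (hx2 : ∀ s ∈ Ioi (0:ℝ), DifferentiableAt ℝ x2 s)
    (hy0 : ∀ s ∈ Ioi (0:ℝ), DifferentiableAt ℝ y0 s)
    (hy1 : ∀ s ∈ Ioi (0:ℝ), DifferentiableAt ℝ y1 s)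
    (hy2 : ∀ s ∈ Ioi (0:ℝ), DifferentiableAt ℝ y2 s)
    (hξ0 : ∀ s ∈ Ioi (0:ℝ), DifferentiableAt ℝ ξ0 s)
    (hξ1 : ∀ s ∈ Ioi (0:ℝ), DifferentiableAt ℝ ξ1 s)
    (hξ2 : ∀ s ∈ Ioi (0:ℝ), DifferentiableAt ℝ ξ2 s)
    (hη0 : ∀ s ∈ Ioi (0:ℝ), DifferentiableAt ℝ η0 s)
    (hη1 : ∀ s ∈ Ioi (0:ℝ), DifferentiableAt ℝ η1 s)
    (hη2 : ∀ s ∈ Ioi (0:ℝ), DifferentiableAt ℝ η2 s)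
    (e1 : ∀ s ∈ Ioi (0:ℝ), s * deriv x0 s = -η0 s * x0 s - x1 s)
    (e2 : ∀ s ∈ Ioi (0:ℝ), s * deriv x1 s = -η1 s * x0 s - x2 s)
    (e3 : ∀ s ∈ Ioi (0:ℝ), s * deriv x2 s =
      -η2 s * x0 s - s * x0 s + ξ0 s * x0 s + ξ1 s * x1 s + ξ2 s * x2 s)
    (e4 : ∀ s ∈ Ioi (0:ℝ), s * deriv y2 s = -ξ2 s * y2 s + y1 s)
    (e5 : ∀ s ∈ Ioi (0:ℝ), s * deriv y1 s = -ξ1 s * y2 s + y0 s)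
    (e6 : ∀ s ∈ Ioi (0:ℝ), s * deriv y0 s =
      -ξ0 s * y2 s + s * y2 s + η0 s * y0 s + η1 s * y1 s + η2 s * y2 s)
    (e7 : ∀ s ∈ Ioi (0:ℝ), deriv ξ0 s = -(x0 s * y0 s))
    (e8 : ∀ s ∈ Ioi (0:ℝ), deriv ξ1 s = -(x0 s * y1 s))
    (e9 : ∀ s ∈ Ioi (0:ℝ), deriv ξ2 s = -(x0 s * y2 s))
    (e10 : ∀ s ∈ Ioi (0:ℝ), deriv η0 s = -(x0 s * y2 s))
    (e11 : ∀ s ∈ Ioi (0:ℝ), deriv η1 s = -(x1 s * y2 s))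
    (e12 : ∀ s ∈ Ioi (0:ℝ), deriv η2 s = -(x2 s * y2 s)) :
    ∀ s ∈ Ioi (0:ℝ),
      deriv (fun t => ξ0 t - η2 t - η0 t * ξ1 t - ξ2 t * η1 t
        - x2 t * y0 t + η0 t * x2 t * y1 t - ξ2 t * x1 t * y0 t
        + η0 t * ξ2 t * x1 t * y1 t - ξ1 t * x0 t * y0 t
        + (ξ0 t - η2 t - ξ2 t * η1 t) * x0 t * y1 t
        + ξ1 t * η1 t * x0 t * y2 t
        + (ξ0 t - η2 t - η0 t * ξ1 t) * x1 t * y2 t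
        + η1 t * x2 t * y2 t) s = 0 := by
  intro s hs
  have hs0 : s ≠ 0 := ne_of_gt hs
  have X0 := (hx0 s hs).hasDerivAt
  have X1 := (hx1 s hs).hasDerivAt
  have X2 := (hx2 s hs).hasDerivAt
  have Y0 := (hy0 s hs).hasDerivAt
  have Y1 := (hy1 s hs).hasDerivAt
  have Y2 := (hy2 s hs).hasDerivAt
  have A0 := (hξ0 s hs).hasDerivAt
  have A1 := (hξ1 s hs).hasDerivAt
  have A2 := (hξ2 s hs).hasDerivAt
  have B0 := (hη0 s hs).hasDerivAt
  have B1 := (hη1 s hs).hasDerivAt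
  have B2 := (hη2 s hs).hasDerivAt
  have H := (A0.sub B2 |>.sub (B0.mul A1) |>.sub (A2.mul B1)
      |>.sub (X2.mul Y0) |>.add ((B0.mul X2).mul Y1)
      |>.sub ((A2.mul X1).mul Y0) |>.add (((B0.mul A2).mul X1).mul Y1)
      |>.sub ((A1.mul X0).mul Y0)
      |>.add ((((A0.sub B2).sub (A2.mul B1)).mul X0).mul Y1)
      |>.add (((A1.mul B1).mul X0).mul Y2)
      |>.add ((((A0.sub B2).sub (B0.mul A1)).mul X1).mul Y2)
      |>.add ((B1.mul X2).mul Y2))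
  refine H.deriv.trans ?_
  simp only [Pi.mul_apply, Pi.sub_apply]
  have d1 : deriv x0 s = (-η0 s * x0 s - x1 s) / s := by
    field_simp; linarith [e1 s hs]
  have d2 : deriv x1 s = (-η1 s * x0 s - x2 s) / s := by
    field_simp; linarith [e2 s hs]
  have d3 : deriv x2 s =
      (-η2 s * x0 s - s * x0 s + ξ0 s * x0 s + ξ1 s * x1 s + ξ2 s * x2 s) / s := by
    field_simp; linarith [e3 s hs]
  have d4 : deriv y2 s = (-ξ2 s * y2 s + y1 s) / s := by
    field_simp; linarith [e4 s hs]
  have d5 : deriv y1 s = (-ξ1 s * y2 s + y0 s) / s := by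
    field_simp; linarith [e5 s hs]
  have d6 : deriv y0 s =
      (-ξ0 s * y2 s + s * y2 s + η0 s * y0 s + η1 s * y1 s + η2 s * y2 s) / s := by
    field_simp; linarith [e6 s hs]
  rw [d1, d2, d3, d4, d5, d6, e7 s hs, e8 s hs, e9 s hs, e10 s hs, e11 s hs,
    e12 s hs]
  field_simp
  ring
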